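/- Embezzlement of the uniform state, first inequality: Let δ ∈ (0, 1/15) and let b ≤ a ≤ n be positive integers with (n:ℝ) ≥ (a:ℝ)^{1/δ}. Let N ≥ n and M ≥ b be integers, and let W be a unitary matrix on ℂ^N ⊗ ℂ^M (indices {0,…,N−1} and {0,…,M−1}) satisfying W(e_i ⊗ e_0) = e_{⌊i/b⌋} ⊗ e_{(i mod b)} for every 0 ≤ i ≤ N−1. Let μ_b = (1/b) ∑_{e=0}^{b−1} e_e e_e* (the maximally mixed state on the first b standard basis vectors of ℂ^M). Then W (ξ_{a:n} ⊗ e_0 e_0*) W* ≼ (1 + 15δ) · (ξ_{1:n} ⊗ μ_b) in the Loewner order. -/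

import Mathlib

open Matrix Kronecker
open scoped ComplexOrder Classical

/-- The partial harmonic sum `S(a,n) = ∑_{i=a}^{n} 1/i`. -/
noncomputable def harmSum (a n : ℕ) : ℝ := ∑ i ∈ Finset.Icc a n, (1 : ℝ) / i

/-- The embezzling state `ξ_{a:n}` on `ℂ^N`: the diagonal (density) matrix whose `(i,i)`
entry is `1/(i·S(a,n))` for `a ≤ i ≤ n` and `0` otherwise. -/
noncomputable def embezState (a n N : ℕ) : Matrix (Fin N) (Fin N) ℂ :=
  Matrix.of fun i j =>
    if i = j ∧ a ≤ (i : ℕ) ∧ (i : ℕ) ≤ n then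
      ((1 / (((i : ℕ) : ℝ) * harmSum a n) : ℝ) : ℂ)
    else 0

lemma harmSum_nonneg (a n : ℕ) : 0 ≤ harmSum a n := by
  apply Finset.sum_nonneg; intro i _; positivity

lemma harmSum_pos {a n : ℕ} (ha : 0 < a) (han : a ≤ n) : 0 < harmSum a n := by
  apply Finset.sum_pos' (fun i _ => by positivity)
  exact ⟨a, Finset.mem_Icc.mpr ⟨le_refl a, han⟩, by positivity⟩

lemma harmSum_le_one_add_log {m : ℕ} (hm : 1 ≤ m) : harmSum 1 m ≤ 1 + Real.log m := by
  induction m with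
  | zero => omega
  | succ k ih =>
    rcases Nat.eq_or_lt_of_le hm with h | h
    · have hk0 : k = 0 := by omega
      subst hk0; norm_num [harmSum]
    · have hk : 1 ≤ k := by omega
      have hk0 : (0:ℝ) < k := by exact_mod_cast hk
      have hstep : Real.log ((k:ℝ)/((k:ℝ)+1)) ≤ (k:ℝ)/((k:ℝ)+1) - 1 :=
        Real.log_le_sub_one_of_pos (by positivity)
      have hlog : Real.log ((k:ℝ)/((k:ℝ)+1)) = Real.log k - Real.log ((k:ℝ)+1) :=
        Real.log_div (by positivity) (by positivity)
      have h2 : (1:ℝ)/((k:ℝ)+1) ≤ Real.log ((k:ℝ)+1) - Real.log k := by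
        have heq : (k:ℝ)/((k:ℝ)+1) - 1 = -(1/((k:ℝ)+1)) := by field_simp; ring
        rw [hlog, heq] at hstep; linarith
      have : harmSum 1 (k+1) = harmSum 1 k + 1/((k:ℝ)+1) := by
        rw [harmSum, Finset.sum_Icc_succ_top (by omega), ← harmSum]
        push_cast; ring_nf
      rw [this]
      have := ih hk
      push_cast
      linarith

lemma log_le_harmSum {a n : ℕ} (ha : 1 ≤ a) (han : a ≤ n) :
    Real.log n - Real.log a ≤ harmSum a n := by
  have key : ∀ m, a ≤ m → Real.log (m+1) - Real.log a ≤ harmSum a m := by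
    intro m
    induction m with
    | zero => omega
    | succ k ih =>
      intro hak
      have step : ∀ j : ℕ, 1 ≤ j → Real.log (j+1) - Real.log j ≤ 1/(j:ℝ) := by
        intro j hj
        have hj0 : (0:ℝ) < j := by exact_mod_cast hj
        have hstep : Real.log (((j:ℝ)+1)/(j:ℝ)) ≤ ((j:ℝ)+1)/(j:ℝ) - 1 :=
          Real.log_le_sub_one_of_pos (by positivity)
        have hlog : Real.log (((j:ℝ)+1)/(j:ℝ)) = Real.log ((j:ℝ)+1) - Real.log j :=
          Real.log_div (by positivity) (by positivity)
        have heq : ((j:ℝ)+1)/(j:ℝ) - 1 = 1/(j:ℝ) := by field_simp; ring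
        rw [hlog, heq] at hstep; linarith
      rcases Nat.eq_or_lt_of_le hak with h | h
      · have : harmSum a (k+1) = 1/((k:ℝ)+1) := by
          rw [harmSum, h, Finset.Icc_self, Finset.sum_singleton]
          push_cast; ring
        rw [this]
        have hstep := step (k+1) (by omega)
        have ha' : (a:ℝ) = (k:ℝ)+1 := by exact_mod_cast h
        push_cast at hstep
        rw [ha']; push_cast; linarith
      · have hk : a ≤ k := by omega
        have : harmSum a (k+1) = harmSum a k + 1/((k:ℝ)+1) := by
          rw [harmSum, Finset.sum_Icc_succ_top (by omega), ← harmSum]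
          push_cast; ring_nf
        rw [this]
        have h1 := ih hk
        have h2 := step (k+1) (by omega)
        push_cast at h2 ⊢
        linarith
  have h1 := key n han
  have hn0 : (0:ℝ) < n := by exact_mod_cast (by omega : 0 < n)
  have h2 : Real.log n ≤ Real.log (n+1) := Real.log_le_log hn0 (by linarith)
  linarith

lemma harm_main {δ : ℝ} (hδ0 : 0 < δ) (hδ : δ < 1/15) {a n : ℕ} (ha : 1 ≤ a) (han : a ≤ n)
    (hn : ((a:ℝ)) ^ ((1:ℝ)/δ) ≤ (n:ℝ)) : harmSum 1 n ≤ (1 + 15*δ) * harmSum a n := by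
  have hsplit : harmSum 1 n = harmSum 1 (a-1) + harmSum a n := by
    have h1 : Finset.Icc 1 (a-1) = Finset.Ico 1 a := by
      rw [← Finset.Ico_add_one_right_eq_Icc]; congr 1; omega
    have h2 : Finset.Icc a n = Finset.Ico a (n+1) := (Finset.Ico_add_one_right_eq_Icc a n).symm
    have h3 : Finset.Icc 1 n = Finset.Ico 1 (n+1) := (Finset.Ico_add_one_right_eq_Icc 1 n).symm
    rw [harmSum, harmSum, harmSum, h1, h2, h3,
      Finset.sum_Ico_consecutive _ (by omega) (by omega)]
  rw [hsplit]
  have hSa := harmSum_pos (by omega : 0 < a) han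
  rcases Nat.eq_or_lt_of_le ha with h1 | h1
  · have : harmSum 1 (a-1) = 0 := by simp [harmSum, ← h1]
    rw [this]; nlinarith
  · -- a ≥ 2
    have ha2 : 2 ≤ a := h1
    have hup : harmSum 1 (a-1) ≤ 1 + Real.log a := by
      have hu := harmSum_le_one_add_log (m := a-1) (by omega)
      have hlog : Real.log ((a-1:ℕ):ℝ) ≤ Real.log a := by
        apply Real.log_le_log (by exact_mod_cast (by omega : 0 < a - 1))
        exact_mod_cast Nat.sub_le a 1
      linarith
    have hlow : Real.log n - Real.log a ≤ harmSum a n := log_le_harmSum (by omega) han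
    have hlogn : (1/δ) * Real.log a ≤ Real.log n := by
      rw [← Real.log_rpow (by positivity : (0:ℝ) < a)]
      apply Real.log_le_log (by positivity)
      exact hn
    have hloga : Real.log 2 ≤ Real.log a := Real.log_le_log (by norm_num)
      (by exact_mod_cast ha2)
    have hl2 := Real.log_two_gt_d9
    have hloga0 : 0 < Real.log a := by linarith
    have key : harmSum 1 (a-1) ≤ 15 * δ * harmSum a n := by
      have e1 : 15 * δ * (Real.log n - Real.log a) ≤ 15 * δ * harmSum a n := by
        nlinarith
      have e2 : 15 * (1 - δ) * Real.log a ≤ 15 * δ * (Real.log n - Real.log a) := by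
        have : 15 * Real.log a ≤ 15 * δ * Real.log n := by
          have := mul_le_mul_of_nonneg_left hlogn (by positivity : (0:ℝ) ≤ 15*δ)
          have h0 : 15 * Real.log (a:ℝ) = 15*δ*((1/δ)*Real.log a) := by
            field_simp
          linarith [h0 ▸ this]
        nlinarith
      have e3 : harmSum 1 (a-1) ≤ 15 * (1-δ) * Real.log a := by nlinarith
      linarith
    nlinarith


/-- The index map `i ↦ (⌊i/b⌋, i mod b)`. -/
def embF (b N M : ℕ) (hb : 0 < b) (hM : b ≤ M) : Fin N → Fin N × Fin M :=
  fun i => (⟨(i:ℕ)/b, lt_of_le_of_lt (Nat.div_le_self _ _) i.isLt⟩,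
            ⟨(i:ℕ)%b, lt_of_lt_of_le (Nat.mod_lt _ hb) hM⟩)

lemma embF_inj (b N M : ℕ) (hb : 0 < b) (hM : b ≤ M) :
    Function.Injective (embF b N M hb hM) := by
  intro i j h
  simp only [embF, Prod.mk.injEq, Fin.mk.injEq] at h
  obtain ⟨h1, h2⟩ := h
  have hi := Nat.div_add_mod (i:ℕ) b
  have hj := Nat.div_add_mod (j:ℕ) b
  rw [h1, h2] at hi
  apply Fin.ext
  omega

lemma embezState_diag (a n N : ℕ) :
    embezState a n N = Matrix.diagonal (fun i : Fin N =>
      if a ≤ (i:ℕ) ∧ (i:ℕ) ≤ n then ((1/(((i:ℕ):ℝ) * harmSum a n) : ℝ) : ℂ) else 0) := by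
  ext i j
  simp only [embezState, Matrix.of_apply, Matrix.diagonal_apply]
  by_cases h : i = j
  · subst h; by_cases hP : a ≤ (i:ℕ) ∧ (i:ℕ) ≤ n <;> simp [hP]
  · simp [h]

/-- Embezzlement of the uniform state, first inequality:
`W (ξ_{a:n} ⊗ |0⟩⟨0|) W* ≼ (1 + 15δ) · (ξ_{1:n} ⊗ μ_b)`. -/
theorem embezzle_uniform_first (δ : ℝ) (hδ0 : 0 < δ) (hδ : δ < 1 / 15)
    (b a n N M : ℕ) (hb : 0 < b) (hba : b ≤ a) (han : a ≤ n)
    (hn : ((a : ℝ)) ^ ((1 : ℝ) / δ) ≤ (n : ℝ)) (hN : n ≤ N) (hM : b ≤ M)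
    (W : Matrix (Fin N × Fin M) (Fin N × Fin M) ℂ)
    (hW : W ∈ Matrix.unitaryGroup (Fin N × Fin M) ℂ)
    (hWcol : ∀ (i : Fin N) (p : Fin N × Fin M) (z : Fin M), (z : ℕ) = 0 →
      W p (i, z) =
        if (p.1 : ℕ) = (i : ℕ) / b ∧ (p.2 : ℕ) = (i : ℕ) % b then 1 else 0) :
    ((((1 + 15 * δ : ℝ)) : ℂ) •
        (embezState 1 n N ⊗ₖ
          Matrix.of (fun z z' : Fin M =>
            if z = z' ∧ (z : ℕ) < b then ((1 / (b : ℝ) : ℝ) : ℂ) else 0))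
      - W * (embezState a n N ⊗ₖ
          Matrix.of (fun z z' : Fin M =>
            if (z : ℕ) = 0 ∧ (z' : ℕ) = 0 then 1 else 0)) * Wᴴ).PosSemidef := by
  classical
  have hM0 : 0 < M := lt_of_lt_of_le hb hM
  have ha1 : 1 ≤ a := hb.trans_le hba
  have hn1 : 1 ≤ n := ha1.trans han
  set f := embF b N M hb hM with hf
  have hfinj := embF_inj b N M hb hM
  set Sa := harmSum a n with hSa
  set S1 := harmSum 1 n with hS1
  have hSa0 : 0 < Sa := harmSum_pos (by omega) han
  have hS10 : 0 < S1 := harmSum_pos one_pos hn1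
  have hmain : S1 ≤ (1 + 15*δ) * Sa := harm_main hδ0 hδ ha1 han hn
  set z0 : Fin M := ⟨0, hM0⟩ with hz0
  -- real diagonal entries
  set d0 : Fin N → ℝ := fun i => if a ≤ (i:ℕ) ∧ (i:ℕ) ≤ n then 1/(((i:ℕ):ℝ) * Sa) else 0 with hd0
  set e1 : Fin N → ℝ := fun i => if 1 ≤ (i:ℕ) ∧ (i:ℕ) ≤ n then 1/(((i:ℕ):ℝ) * S1) else 0 with he1
  set mb : Fin M → ℝ := fun z => if (z:ℕ) < b then 1/(b:ℝ) else 0 with hmb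
  set g : Fin N × Fin M → ℝ := fun p =>
    (1 + 15*δ) * (e1 p.1 * mb p.2) - ∑ i : Fin N, (if p = f i then d0 i else 0) with hg
  -- the three matrices as diagonals
  have hmu : (Matrix.of (fun z z' : Fin M =>
      if z = z' ∧ (z : ℕ) < b then ((1 / (b : ℝ) : ℝ) : ℂ) else 0))
      = Matrix.diagonal (fun z : Fin M => ((mb z : ℝ) : ℂ)) := by
    ext z z'
    simp only [Matrix.of_apply, Matrix.diagonal_apply, hmb]
    by_cases h : z = z'
    · subst h; by_cases hP : (z:ℕ) < b <;> simp [hP]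
    · simp [h]
  have hpr : (Matrix.of (fun z z' : Fin M =>
      if (z : ℕ) = 0 ∧ (z' : ℕ) = 0 then (1:ℂ) else 0))
      = Matrix.diagonal (fun z : Fin M => if (z:ℕ) = 0 then (1:ℂ) else 0) := by
    ext z z'
    simp only [Matrix.of_apply, Matrix.diagonal_apply]
    by_cases h : z = z'
    · subst h; by_cases hP : (z:ℕ) = 0 <;> simp [hP]
    · have : ¬((z:ℕ) = 0 ∧ (z':ℕ) = 0) := by
        rintro ⟨h1, h2⟩; exact h (Fin.ext (h1.trans h2.symm))
      simp [h, this]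
  -- rewrite LHS Kronecker as diagonal
  have hL : embezState 1 n N ⊗ₖ (Matrix.of (fun z z' : Fin M =>
      if z = z' ∧ (z : ℕ) < b then ((1 / (b : ℝ) : ℝ) : ℂ) else 0))
      = Matrix.diagonal (fun p : Fin N × Fin M => ((e1 p.1 * mb p.2 : ℝ) : ℂ)) := by
    rw [embezState_diag, hmu, Matrix.diagonal_kronecker_diagonal]
    congr 1
    funext p
    simp only [he1, ← hS1, Complex.ofReal_mul, apply_ite Complex.ofReal,
      Complex.ofReal_zero]
  -- the conjugated matrix is diagonal
  have hR : W * (embezState a n N ⊗ₖ (Matrix.of (fun z z' : Fin M =>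
      if (z : ℕ) = 0 ∧ (z' : ℕ) = 0 then (1:ℂ) else 0))) * Wᴴ
      = Matrix.diagonal (fun p : Fin N × Fin M =>
          ((∑ i : Fin N, (if p = f i then d0 i else 0) : ℝ) : ℂ)) := by
    rw [embezState_diag, hpr, Matrix.diagonal_kronecker_diagonal]
    ext p p'
    rw [Matrix.mul_assoc, Matrix.mul_apply]
    simp only [Matrix.diagonal_mul, Matrix.conjTranspose_apply]
    rw [Fintype.sum_prod_type]
    have hinner : ∀ i : Fin N,
        (∑ z : Fin M, W p (i, z) *
          (((if a ≤ (i:ℕ) ∧ (i:ℕ) ≤ n then ((1/(((i:ℕ):ℝ) * Sa) : ℝ) : ℂ) else 0) *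
            (if (z:ℕ) = 0 then (1:ℂ) else 0)) * star (W p' (i, z))))
        = (if p = f i then 1 else 0) * ((d0 i : ℝ) : ℂ) *
            star ((if p' = f i then (1:ℂ) else 0)) := by
      intro i
      have hcollapse : ∀ z : Fin M, (W p (i, z) *
          (((if a ≤ (i:ℕ) ∧ (i:ℕ) ≤ n then ((1/(((i:ℕ):ℝ) * Sa) : ℝ) : ℂ) else 0) *
            (if (z:ℕ) = 0 then (1:ℂ) else 0)) * star (W p' (i, z))))
          = if z = z0 then (if p = f i then 1 else 0) * ((d0 i : ℝ) : ℂ) *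
              star ((if p' = f i then (1:ℂ) else 0)) else 0 := by
        intro z
        by_cases hz : z = z0
        · subst hz
          have hz0' : ((z0 : Fin M) : ℕ) = 0 := rfl
          rw [hWcol i p z0 hz0', hWcol i p' z0 hz0', if_pos hz0']
          have hiff : ∀ q : Fin N × Fin M,
              ((q.1 : ℕ) = (i : ℕ) / b ∧ (q.2 : ℕ) = (i : ℕ) % b) ↔ q = f i := by
            intro q
            constructor
            · rintro ⟨h1, h2⟩
              apply Prod.ext
              · exact Fin.ext h1
              · exact Fin.ext h2
            · rintro rfl; exact ⟨rfl, rfl⟩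
          rw [if_congr (hiff p) rfl rfl, if_congr (hiff p') rfl rfl]
          simp only [hd0]
          rw [apply_ite Complex.ofReal, Complex.ofReal_zero]
          push_cast
          ring
        · have hz' : ¬ ((z:ℕ) = 0) := fun h => hz (Fin.ext h)
          rw [if_neg hz', if_neg hz]
          ring
      rw [Finset.sum_congr rfl (fun z _ => hcollapse z), Finset.sum_ite_eq' Finset.univ z0]
      simp
    rw [Finset.sum_congr rfl (fun i _ => hinner i)]
    rw [Matrix.diagonal_apply]
    by_cases hpp : p = p'
    · subst hpp
      rw [if_pos rfl, Complex.ofReal_sum]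
      apply Finset.sum_congr rfl
      intro i _
      by_cases hpf : p = f i
      · simp [hpf]
      · simp [hpf]
    · rw [if_neg hpp]
      apply Finset.sum_eq_zero
      intro i _
      by_cases hpf : p = f i
      · have hpf' : p' ≠ f i := fun h => hpp (hpf.trans h.symm)
        simp [hpf, hpf']
      · simp [hpf]
  -- combine
  have hkey : ((((1 + 15 * δ : ℝ)) : ℂ) •
        (embezState 1 n N ⊗ₖ
          Matrix.of (fun z z' : Fin M =>
            if z = z' ∧ (z : ℕ) < b then ((1 / (b : ℝ) : ℝ) : ℂ) else 0))
      - W * (embezState a n N ⊗ₖ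
          Matrix.of (fun z z' : Fin M =>
            if (z : ℕ) = 0 ∧ (z' : ℕ) = 0 then 1 else 0)) * Wᴴ)
      = Matrix.diagonal (fun p => ((g p : ℝ) : ℂ)) := by
    rw [hL, hR, ← Matrix.diagonal_smul, Matrix.diagonal_sub]
    congr 1
    funext p
    simp only [Pi.sub_apply, Pi.smul_apply, hg, smul_eq_mul]
    push_cast
    ring
  rw [hkey]
  rw [Matrix.posSemidef_diagonal_iff]
  intro p
  rw [← Complex.ofReal_zero, Complex.real_le_real]
  -- now prove 0 ≤ g p
  simp only [hg]
  have he1nn : 0 ≤ e1 p.1 := by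
    simp only [he1]; split_ifs with h
    · positivity
    · exact le_refl 0
  have hmbnn : 0 ≤ mb p.2 := by
    simp only [hmb]; split_ifs with h
    · positivity
    · exact le_refl 0
  have hc0 : (0:ℝ) ≤ 1 + 15*δ := by linarith
  by_cases hex : ∃ i : Fin N, p = f i
  · obtain ⟨i0, rfl⟩ := hex
    have hcoord1 : (((f i0).1 : Fin N) : ℕ) = (i0:ℕ)/b := rfl
    have hcoord2 : (((f i0).2 : Fin M) : ℕ) = (i0:ℕ)%b := rfl
    have hsum : (∑ i : Fin N, if f i0 = f i then d0 i else 0) = d0 i0 := by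
      have heach : ∀ i : Fin N, (if f i0 = f i then d0 i else 0)
          = (if i0 = i then d0 i else 0) := by
        intro i
        by_cases h : i0 = i
        · subst h; simp
        · rw [if_neg (fun hh => h (hfinj hh)), if_neg h]
      rw [Finset.sum_congr rfl (fun i _ => heach i), Finset.sum_ite_eq Finset.univ i0 d0]
      simp
    rw [hsum]
    by_cases hin : a ≤ (i0:ℕ) ∧ (i0:ℕ) ≤ n
    · have hq1 : 1 ≤ (i0:ℕ)/b := (Nat.one_le_div_iff hb).mpr (hba.trans hin.1)
      have hqn : (i0:ℕ)/b ≤ n := le_trans (Nat.div_le_self _ _) hin.2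
      have hrb : (i0:ℕ) % b < b := Nat.mod_lt _ hb
      have hd0v : d0 i0 = 1/(((i0:ℕ):ℝ) * Sa) := by
        simp only [hd0]; rw [if_pos hin]
      have he1v : e1 (f i0).1 = 1/(((((i0:ℕ)/b : ℕ)):ℝ) * S1) := by
        simp only [he1]; rw [hcoord1, if_pos ⟨hq1, hqn⟩]
      have hmbv : mb (f i0).2 = 1/(b:ℝ) := by
        simp only [hmb]; rw [hcoord2, if_pos hrb]
      rw [hd0v, he1v, hmbv, sub_nonneg]
      have hq0 : (0:ℝ) < (((i0:ℕ)/b : ℕ):ℝ) := by exact_mod_cast hq1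
      have hb0 : (0:ℝ) < (b:ℝ) := by exact_mod_cast hb
      have hi00 : (0:ℝ) < ((i0:ℕ):ℝ) := by
        exact_mod_cast lt_of_lt_of_le hb (hba.trans hin.1)
      have hqb : ((((i0:ℕ)/b : ℕ)):ℝ) * (b:ℝ) ≤ ((i0:ℕ):ℝ) := by
        exact_mod_cast Nat.div_mul_le_self (i0:ℕ) b
      calc (1:ℝ)/(((i0:ℕ):ℝ) * Sa)
          ≤ (1+15*δ)/(((((i0:ℕ)/b : ℕ)):ℝ) * S1 * (b:ℝ)) := by
            rw [div_le_div_iff₀ (by positivity) (by positivity)]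
            have h1 : ((((i0:ℕ)/b : ℕ)):ℝ) * (b:ℝ) * S1 ≤ ((i0:ℕ):ℝ) * ((1+15*δ) * Sa) :=
              mul_le_mul hqb hmain hS10.le hi00.le
            nlinarith
        _ = (1+15*δ) * (1/(((((i0:ℕ)/b : ℕ)):ℝ) * S1) * (1/(b:ℝ))) := by
            field_simp
    · have hd0z : d0 i0 = 0 := by simp only [hd0]; rw [if_neg hin]
      rw [hd0z, sub_zero]
      exact mul_nonneg hc0 (mul_nonneg he1nn hmbnn)
  · have hsum0 : (∑ i : Fin N, if p = f i then d0 i else 0) = 0 := by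
      apply Finset.sum_eq_zero; intro i _
      rw [if_neg (fun h => hex ⟨i, h⟩)]
    rw [hsum0, sub_zero]
    exact mul_nonneg hc0 (mul_nonneg he1nn hmbnn)
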